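/- With V, R, V*, v_i^min, v_i^max as in the context: if V* = {v*} consists of a single point and v*_i ∈ {v_i^min, v_i^max} for exactly one player i, then a valid utility remapping function ψ : V → R exists if and only if for every v ∈ V with v_i ≠ v*_i there exists ε_v > 0 such that the point obtained from v by increasing its i-th coordinate by ε_v (keeping the other coordinate fixed) lies in R. -/

import Mathlib

namespace SPIs

/-- `Pareto x y` means `y` is a weak Pareto improvement on `x`, i.e. `y ⪰ x`. -/
def Pareto {n : ℕ} (x y : Fin n → ℝ) : Prop := ∀ i, x i ≤ y i

/-- `StrictPareto x y` means `y` is a strict Pareto improvement on `x`, i.e. `y ≻ x`. -/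
def StrictPareto {n : ℕ} (x y : Fin n → ℝ) : Prop := Pareto x y ∧ ∃ i, x i < y i

/-- An `n`-player normal-form game whose (finite, nonempty) action sets are drawn from the
fixed countably infinite universe `ℕ`. -/
structure Game (n : ℕ) where
  act : Fin n → Finset ℕ
  act_nonempty : ∀ i, (act i).Nonempty
  u : (Fin n → ℕ) → Fin n → ℝ

namespace Game

variable {n : ℕ}

/-- `a` is an outcome (action profile) of `G`. -/
def mem (G : Game n) (a : Fin n → ℕ) : Prop := ∀ i, a i ∈ G.act i

/-- Action `x` of Player `i` is strictly dominated (by some action `x'`) in `G`. -/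
def Dominated (G : Game n) (i : Fin n) (x : ℕ) : Prop :=
  x ∈ G.act i ∧ ∃ x' ∈ G.act i, ∀ a : Fin n → ℕ, G.mem a →
    G.u (Function.update a i x) i < G.u (Function.update a i x') i

/-- `G` contains no strictly dominated actions. -/
def FullyReduced (G : Game n) : Prop := ∀ i x, ¬ G.Dominated i x

/-- `G'` is obtained from `G` by removing a single strictly dominated action. -/
def RemoveStep (G G' : Game n) : Prop :=
  ∃ i x, G.Dominated i x ∧
    G'.act = Function.update G.act i ((G.act i).erase x) ∧ G'.u = G.u

/-- `H` is the reduced game `Ḡ` of `G`: it is obtained from `G` by iteratively removing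
strictly dominated actions and itself has none left. -/
def IsReduction (G H : Game n) : Prop :=
  Relation.ReflTransGen RemoveStep G H ∧ H.FullyReduced

/-- `φ` is a game isomorphism from `G` to `G'`. -/
def Iso (G G' : Game n) (φ : Fin n → ℕ → ℕ) : Prop :=
  (∀ i, Set.BijOn (φ i) (G.act i : Set ℕ) (G'.act i : Set ℕ)) ∧
  ∃ m b : Fin n → ℝ, (∀ i, 0 < m i) ∧
    ∀ a : Fin n → ℕ, G.mem a → ∀ i, G'.u (fun j => φ j (a j)) i = m i * G.u a i + b i

/-- The finite set of all action profiles of `G`. -/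
def outcomes (G : Game n) : Finset (Fin n → ℕ) := Fintype.piFinset G.act

end Game

/-- A valid utility remapping function from the set `V` of payoff vectors into the set `R`
of payoff vectors: it maps `V` into `R`, is weakly Pareto improving on `V`, strictly Pareto
improving somewhere on `V`, and entrywise positive affine on `V`. -/
def ValidRemap {n : ℕ} (V R : Set (Fin n → ℝ)) (ψ : (Fin n → ℝ) → Fin n → ℝ) : Prop :=
  (∀ v ∈ V, ψ v ∈ R) ∧ (∀ v ∈ V, Pareto v (ψ v)) ∧ (∃ v ∈ V, StrictPareto v (ψ v)) ∧
  (∀ i, ∃ m b : ℝ, 0 < m ∧ ∀ v ∈ V, ψ v i = m * v i + b)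

/-- `V = u(Ā)`: the set of payoff vectors of the reduced game. -/
def Vset (G Gb : Game 2) : Set (Fin 2 → ℝ) := G.u '' {a | Gb.mem a}

/-- `R = u(Δ(A))`: the convex hull of the set of payoff vectors of `G`. -/
def Rset (G : Game 2) : Set (Fin 2 → ℝ) := convexHull ℝ (G.u '' {a | G.mem a})

/-- `V*`: the set of points of `V` that cannot be strictly Pareto improved within `R`. -/
def VstarSet (G Gb : Game 2) : Set (Fin 2 → ℝ) :=
  {v ∈ Vset G Gb | ¬ ∃ r ∈ Rset G, StrictPareto v r}

lemma mem_of_reduction {k : ℕ} {G Gb : Game k}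
    (h : Relation.ReflTransGen Game.RemoveStep G Gb) :
    ∀ a, Gb.mem a → G.mem a := by
  induction h with
  | refl => exact fun a ha => ha
  | tail _ hbc ih =>
    intro a ha
    refine ih a ?_
    obtain ⟨i, x, _, hact, _⟩ := hbc
    intro j
    have := ha j
    rw [hact, Function.update_apply] at this
    split_ifs at this with hj
    · subst hj; exact Finset.mem_of_mem_erase this
    · exact this

lemma Vset_subset_Rset {G Gb : Game 2} (hred : Game.IsReduction G Gb) :
    Vset G Gb ⊆ Rset G := by
  refine Set.Subset.trans ?_ (subset_convexHull ℝ _)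
  exact Set.image_mono (fun a ha => mem_of_reduction hred.1 a ha)

lemma Vset_finite (G Gb : Game 2) : (Vset G Gb).Finite := by
  have h : {a | Gb.mem a} = ↑(Gb.outcomes) := by
    ext a; simp [Game.mem, Game.outcomes, Fintype.mem_piFinset]
  rw [Vset, h]
  exact (Gb.outcomes.finite_toSet).image _

lemma exists_validRemap
    {V R : Set (Fin 2 → ℝ)} {i : Fin 2} {vstar : Fin 2 → ℝ} {σ : ℝ}
    (hσ : σ = 1 ∨ σ = -1)
    (hVR : V ⊆ R) (hRconv : Convex ℝ R) (hVfin : V.Finite)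
    (hsign : ∀ v ∈ V, 0 ≤ σ * (v i - vstar i))
    (hex : ∃ v ∈ V, v i ≠ vstar i)
    (hcond : ∀ v ∈ V, v i ≠ vstar i →
      ∃ ε : ℝ, 0 < ε ∧ Function.update v i (v i + ε) ∈ R) :
    ∃ ψ, ValidRemap V R ψ := by
  classical
  have hcond' : ∀ v : Fin 2 → ℝ, ∃ ε : ℝ, 0 < ε ∧
      (v ∈ V → v i ≠ vstar i → Function.update v i (v i + ε) ∈ R) := by
    intro v
    by_cases hv : v ∈ V ∧ v i ≠ vstar i
    · obtain ⟨ε, hε, hmem⟩ := hcond v hv.1 hv.2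
      exact ⟨ε, hε, fun _ _ => hmem⟩
    · exact ⟨1, one_pos, fun h1 h2 => absurd ⟨h1, h2⟩ hv⟩
  choose ε hεpos hεmem using hcond'
  set T : Finset (Fin 2 → ℝ) := hVfin.toFinset.filter (fun v => v i ≠ vstar i) with hT
  have hTmem : ∀ v, v ∈ T ↔ v ∈ V ∧ v i ≠ vstar i := by
    intro v; simp [hT, Set.Finite.mem_toFinset]
  obtain ⟨w, hwV, hwne⟩ := hex
  have hwT : w ∈ T := (hTmem w).2 ⟨hwV, hwne⟩
  have hTne : T.Nonempty := ⟨w, hwT⟩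
  have hδpos : ∀ v ∈ T, 0 < σ * (v i - vstar i) := by
    intro v hv
    obtain ⟨hvV, hvne⟩ := (hTmem v).1 hv
    rcases (hsign v hvV).lt_or_eq with h | h
    · exact h
    · exfalso
      have hne : v i - vstar i ≠ 0 := sub_ne_zero.mpr hvne
      rcases hσ with rfl | rfl <;> simp at h <;> exact hne (by linarith)
  obtain ⟨c, hcpos, hchalf, hcle⟩ :
      ∃ c : ℝ, 0 < c ∧ c ≤ 1/2 ∧ ∀ v ∈ T, c * (σ * (v i - vstar i)) ≤ ε v := by
    refine ⟨min (T.inf' hTne (fun v => ε v / (σ * (v i - vstar i)))) (1/2), ?_, ?_, ?_⟩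
    · refine lt_min ?_ (by norm_num)
      rw [Finset.lt_inf'_iff]
      intro v hv
      exact div_pos (hεpos v) (hδpos v hv)
    · exact min_le_right _ _
    · intro v hv
      have h1 : T.inf' hTne (fun v => ε v / (σ * (v i - vstar i)))
          ≤ ε v / (σ * (v i - vstar i)) := Finset.inf'_le _ hv
      have h2 := hδpos v hv
      have h3 : min (T.inf' hTne (fun v => ε v / (σ * (v i - vstar i)))) (1/2)
          ≤ ε v / (σ * (v i - vstar i)) := le_trans (min_le_left _ _) h1
      calc min (T.inf' hTne (fun v => ε v / (σ * (v i - vstar i)))) (1/2)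
            * (σ * (v i - vstar i))
          ≤ (ε v / (σ * (v i - vstar i))) * (σ * (v i - vstar i)) :=
            mul_le_mul_of_nonneg_right h3 h2.le
        _ = ε v := div_mul_cancel₀ _ h2.ne'
  refine ⟨fun v => Function.update v i (v i + c * (σ * (v i - vstar i))), ?_, ?_, ?_, ?_⟩
  · -- membership
    intro v hv
    show Function.update v i (v i + c * (σ * (v i - vstar i))) ∈ R
    by_cases hne : v i = vstar i
    · have he : v i + c * (σ * (v i - vstar i)) = v i := by rw [hne]; ring
      rw [he, Function.update_eq_self]
      exact hVR hv
    · have hvT : v ∈ T := (hTmem v).2 ⟨hv, hne⟩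
      have hδ := hδpos v hvT
      have hεv := hεpos v
      obtain ⟨s, hs0, hs1, hsε⟩ : ∃ s : ℝ, 0 ≤ s ∧ s ≤ 1 ∧
          s * ε v = c * (σ * (v i - vstar i)) := by
        refine ⟨c * (σ * (v i - vstar i)) / ε v, div_nonneg (by positivity) hεv.le,
          (div_le_one hεv).mpr (hcle v hvT), ?_⟩
        field_simp
      have heq : Function.update v i (v i + c * (σ * (v i - vstar i)))
          = (1 - s) • v + s • Function.update v i (v i + ε v) := by
        funext k
        by_cases hk : k = i
        · subst hk
          simp only [Function.update_self, Pi.add_apply, Pi.smul_apply, smul_eq_mul,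
            Function.update_self]
          linear_combination -hsε
        · simp only [Function.update_of_ne hk, Pi.add_apply, Pi.smul_apply, smul_eq_mul,
            Function.update_of_ne hk]
          ring
      rw [heq]
      exact hRconv (hVR hv) (hεmem v hv hne) (by linarith) hs0 (by ring)
  · -- Pareto
    intro v hv k
    show v k ≤ Function.update v i (v i + c * (σ * (v i - vstar i))) k
    by_cases hk : k = i
    · subst hk
      rw [Function.update_self]
      nlinarith [hsign v hv, hcpos]
    · rw [Function.update_of_ne hk]
  · -- strict somewhere
    refine ⟨w, hwV, ?_, i, ?_⟩
    · intro k
      show w k ≤ Function.update w i (w i + c * (σ * (w i - vstar i))) k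
      by_cases hk : k = i
      · subst hk
        rw [Function.update_self]
        nlinarith [hsign w hwV, hcpos]
      · rw [Function.update_of_ne hk]
    · show w i < Function.update w i (w i + c * (σ * (w i - vstar i))) i
      rw [Function.update_self]
      nlinarith [hδpos w hwT, hcpos]
  · -- affine
    intro k
    by_cases hk : k = i
    · subst hk
      refine ⟨1 + σ * c, -(σ * c * vstar k), ?_, ?_⟩
      · rcases hσ with rfl | rfl <;> nlinarith
      · intro v hv
        show Function.update v k (v k + c * (σ * (v k - vstar k))) k = _
        rw [Function.update_self]; ring
    · refine ⟨1, 0, one_pos, fun v hv => ?_⟩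
      show Function.update v i (v i + c * (σ * (v i - vstar i))) k = 1 * v k + 0
      rw [Function.update_of_ne hk]; ring

/-- Case 2(b) of Theorem 4 of the paper: if `V* = {v*}` and `v*` is extremal
for exactly one player `i`, then a valid utility remapping function `ψ : V → R` exists iff
every `v ∈ V` with `v i ≠ v* i` can be moved some positive amount `ε` in direction `i` while
staying in `R`. -/
theorem correlated_token_spi_case_one_extremal (G Gb : Game 2)
    (hred : Game.IsReduction G Gb)
    (hV : (Vset G Gb).Nontrivial)
    (vstar vmin vmax : Fin 2 → ℝ)
    (hmin : ∀ i, IsLeast ((fun v => v i) '' Vset G Gb) (vmin i))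
    (hmax : ∀ i, IsGreatest ((fun v => v i) '' Vset G Gb) (vmax i))
    (hstar : VstarSet G Gb = {vstar})
    (i : Fin 2)
    (hi : vstar i = vmin i ∨ vstar i = vmax i)
    (hother : ∀ j, j ≠ i → ¬(vstar j = vmin j ∨ vstar j = vmax j)) :
    (∃ ψ : (Fin 2 → ℝ) → Fin 2 → ℝ, ValidRemap (Vset G Gb) (Rset G) ψ) ↔
      (∀ v ∈ Vset G Gb, v i ≠ vstar i →
        ∃ ε : ℝ, 0 < ε ∧ Function.update v i (v i + ε) ∈ Rset G) := by

  classical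
  have hVR : Vset G Gb ⊆ Rset G := Vset_subset_Rset hred
  have hVfin : (Vset G Gb).Finite := Vset_finite G Gb
  have hRconv : Convex ℝ (Rset G) := convex_convexHull ℝ _
  have hstarVs : vstar ∈ VstarSet G Gb := by rw [hstar]; exact rfl
  obtain ⟨hstarV, hstarno⟩ := hstarVs
  have hlb : ∀ v ∈ Vset G Gb, ∀ k, vmin k ≤ v k := fun v hv k => (hmin k).2 ⟨v, hv, rfl⟩
  have hub : ∀ v ∈ Vset G Gb, ∀ k, v k ≤ vmax k := fun v hv k => (hmax k).2 ⟨v, hv, rfl⟩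
  obtain ⟨j, hj⟩ := exists_ne i
  have hfin2 : ∀ l : Fin 2, l ≠ i → l = j := by
    intro l hl
    have h1 : l.val < 2 := l.isLt
    have h2 : i.val < 2 := i.isLt
    have h3 : j.val < 2 := j.isLt
    have h4 : l.val ≠ i.val := fun h => hl (Fin.ext h)
    have h5 : j.val ≠ i.val := fun h => hj (Fin.ext h)
    exact Fin.ext (by omega)
  have hexne : ∃ v ∈ Vset G Gb, v i ≠ vstar i := by
    by_contra hcon
    push_neg at hcon
    obtain ⟨w, hwV, hwj0⟩ := (hmax j).1
    have hwj : w j = vmax j := hwj0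
    have hwge : ∀ k, vstar k ≤ w k := by
      intro k
      rcases eq_or_ne k i with rfl | hk
      · exact (hcon w hwV).ge
      · rw [hfin2 k hk, hwj]
        exact hub vstar hstarV j
    have hwstar : w ∈ VstarSet G Gb := by
      refine ⟨hwV, ?_⟩
      rintro ⟨r, hrR, hrp, k, hrk⟩
      exact hstarno ⟨r, hrR, fun l => le_trans (hwge l) (hrp l), k,
        lt_of_le_of_lt (hwge k) hrk⟩
    rw [hstar] at hwstar
    apply hother j hj
    right
    rw [← hwstar, hwj]
  constructor
  · rintro ⟨ψ, hmemR, hpar, ⟨v0, hv0V, hv0p, k0, hk0⟩, haff⟩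
    obtain ⟨mi, bi, hmi, hψi⟩ := haff i
    have hfix : ∀ k, ψ vstar k = vstar k := by
      intro k
      refine le_antisymm ?_ (hpar vstar hstarV k)
      by_contra hlt
      push_neg at hlt
      exact hstarno ⟨ψ vstar, hmemR vstar hstarV, hpar vstar hstarV, k, hlt⟩
    have hid : ∀ k, k ≠ i → ∀ v ∈ Vset G Gb, ψ v k = v k := by
      intro k hk v hv
      obtain ⟨m, b, hm, hψk⟩ := haff k
      have hoth := hother k hk
      push_neg at hoth
      obtain ⟨vlo, hloV, hlo0⟩ := (hmin k).1
      have hlo : vlo k = vmin k := hlo0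
      obtain ⟨vhi, hhiV, hhi0⟩ := (hmax k).1
      have hhi : vhi k = vmax k := hhi0
      have h1 : m * vstar k + b = vstar k := by rw [← hψk vstar hstarV]; exact hfix k
      have h2 : vlo k ≤ m * vlo k + b := by rw [← hψk vlo hloV]; exact hpar vlo hloV k
      have h3 : vhi k ≤ m * vhi k + b := by rw [← hψk vhi hhiV]; exact hpar vhi hhiV k
      have hlt1 : vlo k < vstar k := by
        rw [hlo]
        exact (hlb vstar hstarV k).lt_of_ne (fun h => hoth.1 h.symm)
      have hlt2 : vstar k < vhi k := by
        rw [hhi]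
        exact (hub vstar hstarV k).lt_of_ne hoth.2
      have hma : m ≤ 1 := by nlinarith
      have hmb : 1 ≤ m := by nlinarith
      have hm1 : m = 1 := le_antisymm hma hmb
      have hb0 : b = 0 := by rw [hm1] at h1; linarith
      rw [hψk v hv, hm1, hb0]; ring
    have hk0i : k0 = i := by
      rcases eq_or_ne k0 i with h | h
      · exact h
      · rw [hid k0 h v0 hv0V] at hk0
        exact absurd hk0 (lt_irrefl _)
    subst hk0i
    have hbi : mi * vstar k0 + bi = vstar k0 := by
      rw [← hψi vstar hstarV]; exact hfix k0
    have hstrict0 : v0 k0 < mi * v0 k0 + bi := by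
      rw [← hψi v0 hv0V]; exact hk0
    have hmine : mi ≠ 1 := by
      rintro rfl
      linarith
    intro v hv hne
    have hge : v k0 ≤ mi * v k0 + bi := by rw [← hψi v hv]; exact hpar v hv k0
    refine ⟨mi * v k0 + bi - v k0, ?_, ?_⟩
    · rcases hge.lt_or_eq with h | h
      · linarith
      · exfalso
        apply hmine
        have hz : (mi - 1) * (v k0 - vstar k0) = 0 := by linear_combination -h - hbi
        rcases mul_eq_zero.mp hz with h' | h'
        · linarith
        · exact absurd (by linarith : v k0 = vstar k0) hne
    · have heq : Function.update v k0 (v k0 + (mi * v k0 + bi - v k0)) = ψ v := by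
        funext k
        rcases eq_or_ne k k0 with rfl | hk
        · rw [Function.update_self, hψi v hv]; ring
        · rw [Function.update_of_ne hk, hid k hk v hv]
      rw [heq]
      exact hmemR v hv
  · intro hcond
    rcases hi with hic | hic
    · refine exists_validRemap (Or.inl rfl) hVR hRconv hVfin ?_ hexne hcond
      intro v hv
      have h := hlb v hv i
      rw [hic]
      nlinarith
    · refine exists_validRemap (Or.inr rfl) hVR hRconv hVfin ?_ hexne hcond
      intro v hv
      have h := hub v hv i
      rw [hic]
      nlinarith


end SPIs
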